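/- Let b, b' be bounding cochains of a filtered A∞ algebra, i.e. degree-1 elements with b ≡ 0 mod Λ₊ satisfying Σ_{k≥0} mₖ(b,…,b) = 0, and define the deformed operator m₁^{b,b'}(x) = Σ_{k,ℓ≥0} m_{k+ℓ+1}(b,…,b, x, b',…,b'). Then m₁^{b,b'} ∘ m₁^{b,b'} = 0. -/

import Mathlib

/-- The sign `(−1)^z` as an integer. -/
def sgn (z : ℤ) : ℤ := (((-1 : ℤˣ) ^ z : ℤˣ) : ℤ)

/-- The A∞ relations (formula (5.3) of the paper) for a family of `k`-ary
operations `m k` on a graded module: for every `n`, every sequence of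
homogeneous inputs `x 0, …, x (n−1)` of (shifted) degrees `d 0, …, d (n−1)`,
`0 = Σ_{i + k₂ ≤ n} (−1)^{i + d 0 + ⋯ + d (i−1)}
      m_{n−k₂+1}(x 0, …, x (i−1), m_{k₂}(x i, …, x (i+k₂−1)), x (i+k₂), …)`. -/
def AInftyRel {R C : Type*} [CommRing R] [AddCommGroup C] [Module R C]
    (G : ℤ → Submodule R C) (m : ∀ k : ℕ, (Fin k → C) → C) : Prop :=
  ∀ (n : ℕ) (d : ℕ → ℤ) (x : ℕ → C), (∀ j, x j ∈ G (d j)) →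
    ∑ p ∈ Finset.range (n + 1) ×ˢ Finset.range (n + 1),
      (if p.1 + p.2 ≤ n then
        sgn ((p.1 : ℤ) + ∑ j ∈ Finset.range p.1, d j) •
          m (n - p.2 + 1) (fun j : Fin (n - p.2 + 1) =>
            if j.1 < p.1 then x j.1
            else if j.1 = p.1 then m p.2 (fun t : Fin p.2 => x (p.1 + t.1))
            else x (j.1 + p.2 - 1))
       else 0) = 0

set_option linter.unusedSectionVars false
set_option maxHeartbeats 1000000

namespace DefAux

lemma sgn_add_two_mul (a c : ℤ) : sgn (a + 2 * c) = sgn a := by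
  unfold sgn
  rw [zpow_add, zpow_mul, zpow_two]
  norm_num

lemma sgn_self_add (i : ℤ) : sgn (i + i) = 1 := by
  have h : i + i = 0 + 2 * i := by ring
  rw [h, sgn_add_two_mul]
  simp [sgn]

variable {R C : Type*} [CommRing R] [AddCommGroup C] [Module R C]
variable (m : ∀ k : ℕ, MultilinearMap R (fun _ : Fin k => C) C)

lemma m_congr {n₁ n₂ : ℕ} (h : n₁ = n₂) (v : Fin n₁ → C) (w : Fin n₂ → C)
    (hvw : ∀ t (h1 : t < n₁) (h2 : t < n₂), v ⟨t, h1⟩ = w ⟨t, h2⟩) :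
    m n₁ v = m n₂ w := by
  subst h
  congr 1
  funext j
  simpa using hvw j.1 j.2 j.2

lemma eq_update {n i : ℕ} (hi : i < n) (F G : ℕ → C) (z : C) (hFi : F i = z)
    (hoff : ∀ t, t < n → t ≠ i → F t = G t) :
    (fun j : Fin n => F j.1) = Function.update (fun j : Fin n => G j.1) ⟨i, hi⟩ z := by
  funext j
  rcases eq_or_ne j.1 i with h | h
  · have hj : j = ⟨i, hi⟩ := Fin.ext h
    rw [hj]
    simpa using hFi
  · rw [Function.update_of_ne (by simpa [Fin.ext_iff] using h)]
    exact hoff j.1 j.2 h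

lemma m_slot_sum {n : ℕ} (v : Fin n → C) (i : Fin n)
    {α : Type*} (s : Finset α) (g : α → C) :
    ∑ a ∈ s, m n (Function.update v i (g a)) = m n (Function.update v i (∑ a ∈ s, g a)) := by
  have h := map_sum ((m n).toLinearMap v i) g s
  simp only [MultilinearMap.toLinearMap_apply] at h
  exact h.symm

lemma sum_ite_range {A B : ℕ} (h : A ≤ B) (f : ℕ → C) :
    ∑ k ∈ Finset.range B, (if k < A then f k else 0) = ∑ k ∈ Finset.range A, f k := by
  rw [← Finset.sum_filter]
  congr 1
  ext k
  simp only [Finset.mem_filter, Finset.mem_range]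
  omega

lemma MC_trunc (N : ℕ) (hN : ∀ k, N ≤ k → m k = 0) (b : C)
    (hMC : (∑ᶠ k : ℕ, m k (fun _ => b)) = 0) {M : ℕ} (h : N ≤ M) :
    ∑ k ∈ Finset.range M, m k (fun _ : Fin k => b) = 0 := by
  rw [← hMC]
  refine (finsum_eq_sum_of_support_subset _ ?_).symm
  intro k hk
  simp only [Function.mem_support] at hk
  simp only [Finset.coe_range, Set.mem_Iio]
  by_contra hkM
  exact hk (by rw [hN k (by omega)]; rfl)

variable (b b' x : C)

/-- the sequence `b,…,b,y,b',…,b'` with `y` in slot `k`, as a function on `ℕ`. -/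
def sq (y : C) (k : ℕ) : ℕ → C := fun t => if t < k then b else if t = k then y else b'

/-- `m_{k+l+1}(b^k, y, b'^l)`. -/
def TT (k l : ℕ) (y : C) : C :=
  m (k + l + 1) (fun j : Fin (k + l + 1) => sq b b' y k j.1)

/-- the body of the A∞ relation term for inputs `sq x k`, parameters `(i,k₂)`. -/
def Body (k l i k₂ : ℕ) : C :=
  m ((k + l + 1) - k₂ + 1) (fun j : Fin ((k + l + 1) - k₂ + 1) =>
    if j.1 < i then sq b b' x k j.1
    else if j.1 = i then m k₂ (fun t : Fin k₂ => sq b b' x k (i + t.1))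
    else sq b b' x k (j.1 + k₂ - 1))

/-- the sequence `sq x kx` with slot `i` replaced by `z`, fed to `m n`. -/
def BodyU (n kx i : ℕ) (z : C) : C :=
  m n (fun j : Fin n => if j.1 = i then z else sq b b' x kx j.1)

lemma BodyU_update {n i : ℕ} (hi : i < n) (kx : ℕ) (z : C) :
    BodyU m b b' x n kx i z
      = m n (Function.update (fun j : Fin n => sq b b' x kx j.1) ⟨i, hi⟩ z) := by
  unfold BodyU
  congr 1
  exact eq_update hi (fun t => if t = i then z else sq b b' x kx t)
    (fun t => sq b b' x kx t) z (by simp) (fun t ht hti => by simp [hti])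

lemma BodyU_sum_zero {n i : ℕ} (hi : i < n) (kx : ℕ) {α : Type*} (s : Finset α)
    (w : α → C) (hw : ∑ a ∈ s, w a = 0) :
    ∑ a ∈ s, BodyU m b b' x n kx i (w a) = 0 := by
  have h1 : ∀ a ∈ s, BodyU m b b' x n kx i (w a)
      = m n (Function.update (fun j : Fin n => sq b b' x kx j.1) ⟨i, hi⟩ (w a)) :=
    fun a _ => BodyU_update m b b' x hi kx (w a)
  rw [Finset.sum_congr rfl h1, m_slot_sum, hw]
  exact (m n).map_coord_zero ⟨i, hi⟩ (by simp)

lemma TT_update (k l : ℕ) (y : C) :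
    TT m b b' k l y
      = m (k + l + 1) (Function.update
          (fun j : Fin (k + l + 1) => sq b b' 0 k j.1) ⟨k, by omega⟩ y) := by
  unfold TT
  congr 1
  refine eq_update (by omega) (fun t => sq b b' y k t) (fun t => sq b b' 0 k t) y
    (by simp [sq]) (fun t ht htk => ?_)
  simp [sq, htk]

lemma TT_sum (k l : ℕ) {α : Type*} (s : Finset α) (f : α → C) :
    TT m b b' k l (∑ a ∈ s, f a) = ∑ a ∈ s, TT m b b' k l (f a) := by
  simp only [TT_update]
  exact (m_slot_sum m _ _ s f).symm

lemma TT_add (k l : ℕ) (y z : C) :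
    TT m b b' k l (y + z) = TT m b b' k l y + TT m b b' k l z := by
  simp only [TT_update]
  exact (m (k + l + 1)).map_update_add _ _ y z

lemma TT_zero (k l : ℕ) : TT m b b' k l 0 = 0 := by
  rw [TT_update]
  exact (m (k + l + 1)).map_coord_zero ⟨k, by omega⟩ (by simp)

lemma term_split (d : ℤ) (k l i k₂ : ℕ) :
    (if i + k₂ ≤ k + l + 1 then
       sgn ((i : ℤ) + ∑ j ∈ Finset.range i, (if j = k then d else 1)) •
         Body m b b' x k l i k₂
     else 0)
    = (if i + k₂ ≤ k then Body m b b' x k l i k₂ else 0)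
      + (if i ≤ k ∧ k < i + k₂ ∧ i + k₂ ≤ k + l + 1 then Body m b b' x k l i k₂ else 0)
      + (if k < i ∧ i + k₂ ≤ k + l + 1 then sgn (d + 1) • Body m b b' x k l i k₂ else 0) := by
  have hsum1 : i ≤ k → (∑ j ∈ Finset.range i, (if j = k then d else (1:ℤ))) = i := by
    intro h
    rw [Finset.sum_congr rfl (fun j hj => if_neg (by
      simp only [Finset.mem_range] at hj; omega))]
    simp
  have hsum2 : k < i → (∑ j ∈ Finset.range i, (if j = k then d else (1:ℤ))) = d + i - 1 := by
    intro h
    rw [Finset.sum_congr rfl (fun j _ => show (if j = k then d else (1:ℤ))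
        = (if j = k then d - 1 else 0) + 1 by split_ifs <;> ring)]
    rw [Finset.sum_add_distrib, Finset.sum_ite_eq' (Finset.range i) k (fun _ => d - 1)]
    simp only [Finset.mem_range.2 h, if_true, Finset.sum_const, Finset.card_range,
      nsmul_eq_mul, mul_one]
    ring
  by_cases hc : i + k₂ ≤ k + l + 1
  · by_cases hL : i + k₂ ≤ k
    · have hik : i ≤ k := by omega
      rw [if_pos hc, if_pos hL, if_neg (by omega), if_neg (by omega), hsum1 hik,
        sgn_self_add, one_smul]
      abel
    · by_cases hki : k < i
      · rw [if_pos hc, if_neg hL, if_neg (by omega), if_pos ⟨hki, hc⟩, hsum2 hki]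
        have he : (i : ℤ) + (d + i - 1) = (d + 1) + 2 * ((i : ℤ) - 1) := by ring
        rw [he, sgn_add_two_mul]
        abel
      · have hik : i ≤ k := by omega
        rw [if_pos hc, if_neg hL, if_pos ⟨hik, by omega, hc⟩, if_neg (by omega),
          hsum1 hik, sgn_self_add, one_smul]
        abel
  · rw [if_neg hc, if_neg (by omega), if_neg (by omega), if_neg (by omega)]
    abel


lemma SL (N : ℕ) (hN : ∀ k, N ≤ k → m k = 0)
    (hMC : (∑ᶠ k : ℕ, m k (fun _ => b)) = 0)
    {M M' : ℕ} (hNM : 2 * N ≤ M) (hMM' : M ≤ M') :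
    ∑ z ∈ (Finset.range M ×ˢ Finset.range M) ×ˢ (Finset.range M' ×ˢ Finset.range M'),
      (if z.2.1 + z.2.2 ≤ z.1.1 then Body m b b' x z.1.1 z.1.2 z.2.1 z.2.2 else 0) = 0 := by
  set Q := (Finset.range M ×ˢ Finset.range M) ×ˢ (Finset.range M' ×ˢ Finset.range M') with hQ
  have h1 : ∑ z ∈ Q, (if z.2.1 + z.2.2 ≤ z.1.1 then Body m b b' x z.1.1 z.1.2 z.2.1 z.2.2 else 0)
      = ∑ z ∈ Q.filter (fun z => z.2.1 + z.2.2 ≤ z.1.1),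
          Body m b b' x z.1.1 z.1.2 z.2.1 z.2.2 := (Finset.sum_filter _ _)|>.symm
  have h2 : ∑ z ∈ Q.filter (fun z => z.2.1 + z.2.2 ≤ z.1.1),
        Body m b b' x z.1.1 z.1.2 z.2.1 z.2.2
      = ∑ w ∈ Q.filter (fun w => w.2.1 ≤ w.1.1 ∧ w.1.1 + w.2.2 < M),
          BodyU m b b' x (w.1.1 + w.1.2 + 2) (w.1.1 + 1) w.2.1 (m w.2.2 (fun _ => b)) := by
    refine Finset.sum_nbij' (fun z => ((z.1.1 - z.2.2, z.1.2), z.2))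
      (fun w => ((w.1.1 + w.2.2, w.1.2), w.2)) ?_ ?_ ?_ ?_ ?_
    · rintro ⟨⟨k, l⟩, i, k₂⟩ hz
      dsimp only
      simp only [hQ, Finset.mem_filter, Finset.mem_product, Finset.mem_range] at hz ⊢
      omega
    · rintro ⟨⟨K, l⟩, i, k₂⟩ hw
      dsimp only
      simp only [hQ, Finset.mem_filter, Finset.mem_product, Finset.mem_range] at hw ⊢
      omega
    · rintro ⟨⟨k, l⟩, i, k₂⟩ hz
      simp only [hQ, Finset.mem_filter, Finset.mem_product, Finset.mem_range] at hz
      dsimp only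
      simp only [Prod.mk.injEq, and_true, true_and]
      omega
    · rintro ⟨⟨K, l⟩, i, k₂⟩ hw
      simp only [hQ, Finset.mem_filter, Finset.mem_product, Finset.mem_range] at hw
      dsimp only
      simp only [Prod.mk.injEq, and_true, true_and]
      omega
    · rintro ⟨⟨k, l⟩, i, k₂⟩ hz
      simp only [hQ, Finset.mem_filter, Finset.mem_product, Finset.mem_range] at hz
      obtain ⟨-, hik⟩ := hz
      dsimp only
      unfold Body BodyU
      refine m_congr m (by omega) _ _ (fun t h1 h2 => ?_)
      dsimp only
      rcases Nat.lt_trichotomy t i with ht | ht | ht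
      · rw [if_pos ht, if_neg (by omega)]
        simp only [sq]
        rw [if_pos (by omega), if_pos (by omega)]
      · subst ht
        rw [if_neg (by omega), if_pos rfl, if_pos rfl]
        congr 1
        funext t'
        simp only [sq]
        rw [if_pos (by omega)]
      · rw [if_neg (by omega), if_neg (by omega), if_neg (by omega)]
        simp only [sq]
        split_ifs <;> first | rfl | omega
  rw [h1, h2, Finset.sum_filter, hQ, Finset.sum_product]
  refine Finset.sum_eq_zero (fun q hq => ?_)
  simp only [Finset.mem_product, Finset.mem_range] at hq
  rw [Finset.sum_product]
  refine Finset.sum_eq_zero (fun i _ => ?_)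
  by_cases hiK : i ≤ q.1
  · by_cases hKN : q.1 + N ≤ M
    · have step1 : ∀ k₂ ∈ Finset.range M',
          (if i ≤ q.1 ∧ q.1 + k₂ < M then
             BodyU m b b' x (q.1 + q.2 + 2) (q.1 + 1) i (m k₂ (fun _ => b)) else 0)
          = (if k₂ < M - q.1 then
             BodyU m b b' x (q.1 + q.2 + 2) (q.1 + 1) i (m k₂ (fun _ => b)) else 0) := by
        intro k₂ _
        by_cases h : q.1 + k₂ < M
        · rw [if_pos ⟨hiK, h⟩, if_pos (by omega)]
        · rw [if_neg (by omega), if_neg (by omega)]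
      rw [Finset.sum_congr rfl step1,
        sum_ite_range (by omega) (fun k₂ => BodyU m b b' x (q.1 + q.2 + 2) (q.1 + 1) i
          (m k₂ (fun _ => b)))]
      exact BodyU_sum_zero m b b' x (by omega) (q.1 + 1) (Finset.range (M - q.1))
        (fun k₂ => m k₂ (fun _ => b)) (MC_trunc m N hN b hMC (by omega))
    · refine Finset.sum_eq_zero (fun k₂ _ => ?_)
      by_cases h : i ≤ q.1 ∧ q.1 + k₂ < M
      · rw [if_pos h]
        unfold BodyU
        rw [hN (q.1 + q.2 + 2) (by omega)]
        rfl
      · rw [if_neg h]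
  · exact Finset.sum_eq_zero (fun k₂ _ => if_neg (by tauto))

lemma SR (N : ℕ) (hN : ∀ k, N ≤ k → m k = 0)
    (hMC' : (∑ᶠ k : ℕ, m k (fun _ => b')) = 0) (d : ℤ)
    {M M' : ℕ} (hNM : 2 * N ≤ M) (hMM' : M ≤ M') :
    ∑ z ∈ (Finset.range M ×ˢ Finset.range M) ×ˢ (Finset.range M' ×ˢ Finset.range M'),
      (if z.1.1 < z.2.1 ∧ z.2.1 + z.2.2 ≤ z.1.1 + z.1.2 + 1 then
        sgn (d + 1) • Body m b b' x z.1.1 z.1.2 z.2.1 z.2.2 else 0) = 0 := by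
  set Q := (Finset.range M ×ˢ Finset.range M) ×ˢ (Finset.range M' ×ˢ Finset.range M') with hQ
  have h1 : ∑ z ∈ Q, (if z.1.1 < z.2.1 ∧ z.2.1 + z.2.2 ≤ z.1.1 + z.1.2 + 1 then
        sgn (d + 1) • Body m b b' x z.1.1 z.1.2 z.2.1 z.2.2 else 0)
      = ∑ z ∈ Q.filter (fun z => z.1.1 < z.2.1 ∧ z.2.1 + z.2.2 ≤ z.1.1 + z.1.2 + 1),
          sgn (d + 1) • Body m b b' x z.1.1 z.1.2 z.2.1 z.2.2 := (Finset.sum_filter _ _).symm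
  have h2 : ∑ z ∈ Q.filter (fun z => z.1.1 < z.2.1 ∧ z.2.1 + z.2.2 ≤ z.1.1 + z.1.2 + 1),
        sgn (d + 1) • Body m b b' x z.1.1 z.1.2 z.2.1 z.2.2
      = ∑ w ∈ Q.filter (fun w => w.1.1 < w.2.1 ∧ w.2.1 ≤ w.1.1 + w.1.2 + 1 ∧ w.1.2 + w.2.2 < M),
          sgn (d + 1) • BodyU m b b' x (w.1.1 + w.1.2 + 2) w.1.1 w.2.1 (m w.2.2 (fun _ => b')) := by
    refine Finset.sum_nbij' (fun z => ((z.1.1, z.1.2 - z.2.2), z.2))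
      (fun w => ((w.1.1, w.1.2 + w.2.2), w.2)) ?_ ?_ ?_ ?_ ?_
    · rintro ⟨⟨k, l⟩, i, k₂⟩ hz
      dsimp only
      simp only [hQ, Finset.mem_filter, Finset.mem_product, Finset.mem_range] at hz ⊢
      omega
    · rintro ⟨⟨k, L⟩, i, k₂⟩ hw
      dsimp only
      simp only [hQ, Finset.mem_filter, Finset.mem_product, Finset.mem_range] at hw ⊢
      omega
    · rintro ⟨⟨k, l⟩, i, k₂⟩ hz
      simp only [hQ, Finset.mem_filter, Finset.mem_product, Finset.mem_range] at hz
      dsimp only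
      simp only [Prod.mk.injEq, and_true, true_and]
      omega
    · rintro ⟨⟨k, L⟩, i, k₂⟩ hw
      simp only [hQ, Finset.mem_filter, Finset.mem_product, Finset.mem_range] at hw
      dsimp only
      simp only [Prod.mk.injEq, and_true, true_and]
      omega
    · rintro ⟨⟨k, l⟩, i, k₂⟩ hz
      simp only [hQ, Finset.mem_filter, Finset.mem_product, Finset.mem_range] at hz
      obtain ⟨-, hki, hik⟩ := hz
      dsimp only
      congr 1
      unfold Body BodyU
      refine m_congr m (by omega) _ _ (fun t h1 h2 => ?_)
      dsimp only
      rcases Nat.lt_trichotomy t i with ht | ht | ht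
      · rw [if_pos ht, if_neg (by omega)]
      · subst ht
        rw [if_neg (by omega), if_pos rfl, if_pos rfl]
        congr 1
        funext t'
        simp only [sq]
        rw [if_neg (by omega), if_neg (by omega)]
      · rw [if_neg (by omega), if_neg (by omega), if_neg (by omega)]
        simp only [sq]
        split_ifs <;> first | rfl | omega
  rw [h1, h2, Finset.sum_filter, hQ, Finset.sum_product]
  refine Finset.sum_eq_zero (fun q hq => ?_)
  simp only [Finset.mem_product, Finset.mem_range] at hq
  rw [Finset.sum_product]
  refine Finset.sum_eq_zero (fun i _ => ?_)
  by_cases hcond : q.1 < i ∧ i ≤ q.1 + q.2 + 1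
  · by_cases hLN : q.2 + N ≤ M
    · have step1 : ∀ k₂ ∈ Finset.range M',
          (if q.1 < i ∧ i ≤ q.1 + q.2 + 1 ∧ q.2 + k₂ < M then
             sgn (d + 1) • BodyU m b b' x (q.1 + q.2 + 2) q.1 i (m k₂ (fun _ => b')) else 0)
          = (if k₂ < M - q.2 then
             sgn (d + 1) • BodyU m b b' x (q.1 + q.2 + 2) q.1 i (m k₂ (fun _ => b')) else 0) := by
        intro k₂ _
        by_cases h : q.2 + k₂ < M
        · rw [if_pos ⟨hcond.1, hcond.2, h⟩, if_pos (by omega)]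
        · rw [if_neg (by omega), if_neg (by omega)]
      rw [Finset.sum_congr rfl step1,
        sum_ite_range (by omega) (fun k₂ => sgn (d + 1) •
          BodyU m b b' x (q.1 + q.2 + 2) q.1 i (m k₂ (fun _ => b'))),
        ← Finset.smul_sum,
        BodyU_sum_zero m b b' x (by omega) q.1 (Finset.range (M - q.2))
          (fun k₂ => m k₂ (fun _ => b')) (MC_trunc m N hN b' hMC' (by omega)),
        smul_zero]
    · refine Finset.sum_eq_zero (fun k₂ _ => ?_)
      by_cases h : q.1 < i ∧ i ≤ q.1 + q.2 + 1 ∧ q.2 + k₂ < M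
      · rw [if_pos h]
        unfold BodyU
        rw [hN (q.1 + q.2 + 2) (by omega)]
        simp
      · rw [if_neg h]
  · exact Finset.sum_eq_zero (fun k₂ _ => if_neg (by tauto))

lemma SM (N : ℕ) (hN : ∀ k, N ≤ k → m k = 0)
    {M M' : ℕ} (hM : M = 2 * N + 2) (hM' : M' = 2 * M) :
    ∑ z ∈ (Finset.range M ×ˢ Finset.range M) ×ˢ (Finset.range M' ×ˢ Finset.range M'),
      (if z.2.1 ≤ z.1.1 ∧ z.1.1 < z.2.1 + z.2.2 ∧ z.2.1 + z.2.2 ≤ z.1.1 + z.1.2 + 1 then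
        Body m b b' x z.1.1 z.1.2 z.2.1 z.2.2 else 0)
    = ∑ q ∈ Finset.range M ×ˢ Finset.range M,
        TT m b b' q.1 q.2 (∑ q' ∈ Finset.range M ×ˢ Finset.range M, TT m b b' q'.1 q'.2 x) := by
  set Q := (Finset.range M ×ˢ Finset.range M) ×ˢ (Finset.range M' ×ˢ Finset.range M') with hQ
  set Q' := (Finset.range M' ×ˢ Finset.range M') ×ˢ (Finset.range M' ×ˢ Finset.range M') with hQ'
  set Q4 := (Finset.range M ×ˢ Finset.range M) ×ˢ (Finset.range M ×ˢ Finset.range M) with hQ4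
  have h1 : ∑ z ∈ Q, (if z.2.1 ≤ z.1.1 ∧ z.1.1 < z.2.1 + z.2.2 ∧ z.2.1 + z.2.2 ≤ z.1.1 + z.1.2 + 1 then
        Body m b b' x z.1.1 z.1.2 z.2.1 z.2.2 else 0)
      = ∑ z ∈ Q.filter (fun z => z.2.1 ≤ z.1.1 ∧ z.1.1 < z.2.1 + z.2.2 ∧ z.2.1 + z.2.2 ≤ z.1.1 + z.1.2 + 1),
          Body m b b' x z.1.1 z.1.2 z.2.1 z.2.2 := (Finset.sum_filter _ _).symm
  have h2 : ∑ z ∈ Q.filter (fun z => z.2.1 ≤ z.1.1 ∧ z.1.1 < z.2.1 + z.2.2 ∧ z.2.1 + z.2.2 ≤ z.1.1 + z.1.2 + 1),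
        Body m b b' x z.1.1 z.1.2 z.2.1 z.2.2
      = ∑ w ∈ Q'.filter (fun w => w.1.1 + w.2.1 < M ∧ w.1.2 + w.2.2 < M),
          TT m b b' w.1.1 w.1.2 (TT m b b' w.2.1 w.2.2 x) := by
    refine Finset.sum_nbij'
      (fun z => ((z.2.1, (z.1.1 + z.1.2 + 1) - (z.2.1 + z.2.2)), (z.1.1 - z.2.1, (z.2.1 + z.2.2) - (z.1.1 + 1))))
      (fun w => ((w.1.1 + w.2.1, w.1.2 + w.2.2), (w.1.1, w.2.1 + w.2.2 + 1))) ?_ ?_ ?_ ?_ ?_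
    · rintro ⟨⟨k, l⟩, i, k₂⟩ hz
      dsimp only
      simp only [hQ, hQ', Finset.mem_filter, Finset.mem_product, Finset.mem_range] at hz ⊢
      omega
    · rintro ⟨⟨K, L⟩, a, c⟩ hw
      dsimp only
      simp only [hQ, hQ', Finset.mem_filter, Finset.mem_product, Finset.mem_range] at hw ⊢
      omega
    · rintro ⟨⟨k, l⟩, i, k₂⟩ hz
      simp only [hQ, Finset.mem_filter, Finset.mem_product, Finset.mem_range] at hz
      dsimp only
      simp only [Prod.mk.injEq, and_true, true_and]
      omega
    · rintro ⟨⟨K, L⟩, a, c⟩ hw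
      simp only [hQ', Finset.mem_filter, Finset.mem_product, Finset.mem_range] at hw
      dsimp only
      simp only [Prod.mk.injEq, and_true, true_and]
      omega
    · rintro ⟨⟨k, l⟩, i, k₂⟩ hz
      simp only [hQ, Finset.mem_filter, Finset.mem_product, Finset.mem_range] at hz
      obtain ⟨-, hik, hki, hsum⟩ := hz
      dsimp only
      unfold Body TT
      refine m_congr m (by omega) _ _ (fun t h1 h2 => ?_)
      dsimp only
      rcases Nat.lt_trichotomy t i with ht | ht | ht
      · rw [if_pos ht]
        simp only [sq]
        rw [if_pos (by omega), if_pos (by omega)]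
      · subst ht
        rw [if_neg (by omega), if_pos rfl]
        simp only [sq, if_true]
        rw [if_neg (lt_irrefl t)]
        refine m_congr m (by omega) _ _ (fun t' h1' h2' => ?_)
        dsimp only
        split_ifs <;> first | rfl | omega
      · rw [if_neg (by omega), if_neg (by omega)]
        simp only [sq]
        split_ifs <;> first | rfl | omega
  have h3 : ∑ w ∈ Q'.filter (fun w => w.1.1 + w.2.1 < M ∧ w.1.2 + w.2.2 < M),
        TT m b b' w.1.1 w.1.2 (TT m b b' w.2.1 w.2.2 x)
      = ∑ w ∈ Q4, TT m b b' w.1.1 w.1.2 (TT m b b' w.2.1 w.2.2 x) := by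
    rw [Finset.sum_filter]
    have hsub : Q4 ⊆ Q' := by
      rintro ⟨⟨K, L⟩, a, c⟩ hw
      simp only [hQ4, hQ', Finset.mem_product, Finset.mem_range] at hw ⊢
      omega
    rw [← Finset.sum_subset hsub (fun w hw hw4 => ?_)]
    · refine Finset.sum_congr rfl (fun w hw => ?_)
      by_cases hc : w.1.1 + w.2.1 < M ∧ w.1.2 + w.2.2 < M
      · rw [if_pos hc]
      · rw [if_neg hc]
        simp only [hQ4, Finset.mem_product, Finset.mem_range] at hw
        have hd : N ≤ w.2.1 + w.2.2 + 1 ∨ N ≤ w.1.1 + w.1.2 + 1 := by omega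
        rcases hd with hd | hd
        · have hz : TT m b b' w.2.1 w.2.2 x = 0 := by
            unfold TT; rw [hN _ hd]; rfl
          rw [hz, TT_zero]
        · unfold TT
          rw [hN _ hd]
          rfl
    · -- outside Q4 the ite is zero
      by_cases hc : w.1.1 + w.2.1 < M ∧ w.1.2 + w.2.2 < M
      · exfalso
        simp only [hQ4, hQ', Finset.mem_product, Finset.mem_range] at hw hw4
        omega
      · rw [if_neg hc]
  rw [h1, h2, h3, hQ4, Finset.sum_product]
  refine Finset.sum_congr rfl (fun q _ => ?_)
  rw [TT_sum]

lemma D_expand (N : ℕ) (hN : ∀ k, N ≤ k → m k = 0) {M : ℕ} (hNM : N ≤ M) (y : C) :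
    (∑ᶠ (k : ℕ), ∑ᶠ (l : ℕ),
      m (k + l + 1) (fun j : Fin (k + l + 1) =>
        if j.1 < k then b else if j.1 = k then y else b'))
    = ∑ q ∈ Finset.range M ×ˢ Finset.range M, TT m b b' q.1 q.2 y := by
  rw [Finset.sum_product]
  rw [finsum_eq_sum_of_support_subset _ (s := Finset.range M) (fun k hk => ?_)]
  · refine Finset.sum_congr rfl (fun k _ => ?_)
    rw [finsum_eq_sum_of_support_subset _ (s := Finset.range M) (fun l hl => ?_)]
    · rfl
    · simp only [Function.mem_support] at hl
      simp only [Finset.coe_range, Set.mem_Iio]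
      by_contra h
      exact hl (by rw [hN (k + l + 1) (by omega)]; rfl)
  · simp only [Function.mem_support] at hk
    simp only [Finset.coe_range, Set.mem_Iio]
    by_contra h
    refine hk (finsum_eq_zero_of_forall_eq_zero (fun l => ?_))
    rw [hN (k + l + 1) (by omega)]
    rfl

lemma key (G : ℤ → Submodule R C) (hrel : AInftyRel G (fun k v => m k v))
    (N : ℕ) (hN : ∀ k, N ≤ k → m k = 0)
    (hbdeg : b ∈ G 1) (hb'deg : b' ∈ G 1)
    (hMC : (∑ᶠ k : ℕ, m k (fun _ => b)) = 0)
    (hMC' : (∑ᶠ k : ℕ, m k (fun _ => b')) = 0)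
    (d : ℤ) (hx : x ∈ G d) :
    ∑ q ∈ Finset.range (2 * N + 2) ×ˢ Finset.range (2 * N + 2),
      TT m b b' q.1 q.2
        (∑ q' ∈ Finset.range (2 * N + 2) ×ˢ Finset.range (2 * N + 2),
          TT m b b' q'.1 q'.2 x) = 0 := by
  set M := 2 * N + 2 with hM
  set M' := 2 * M with hM'
  have Hrel : ∑ z ∈ (Finset.range M ×ˢ Finset.range M) ×ˢ (Finset.range M' ×ˢ Finset.range M'),
      (if z.2.1 + z.2.2 ≤ z.1.1 + z.1.2 + 1 then
        sgn ((z.2.1 : ℤ) + ∑ j ∈ Finset.range z.2.1, (if j = z.1.1 then d else 1)) •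
          Body m b b' x z.1.1 z.1.2 z.2.1 z.2.2
       else 0) = 0 := by
    rw [Finset.sum_product]
    refine Finset.sum_eq_zero (fun q hq => ?_)
    simp only [Finset.mem_product, Finset.mem_range] at hq
    have hmem : ∀ j, sq b b' x q.1 j ∈ G (if j = q.1 then (d : ℤ) else 1) := by
      intro j
      unfold sq
      rcases Nat.lt_trichotomy j q.1 with h | h | h
      · rw [if_neg (by omega), if_pos h]
        exact hbdeg
      · rw [if_pos h, if_neg (by omega), if_pos h]
        exact hx
      · rw [if_neg (by omega), if_neg (by omega), if_neg (by omega)]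
        exact hb'deg
    have H0 := hrel (q.1 + q.2 + 1) (fun j => if j = q.1 then d else 1) (sq b b' x q.1) hmem
    have hss : Finset.range (q.1 + q.2 + 1 + 1) ×ˢ Finset.range (q.1 + q.2 + 1 + 1)
        ⊆ Finset.range M' ×ˢ Finset.range M' := by
      intro p hp
      simp only [Finset.mem_product, Finset.mem_range] at hp ⊢
      omega
    rw [← Finset.sum_subset hss (fun p hp hps => ?_)]
    · exact H0
    · refine if_neg ?_
      dsimp only
      simp only [Finset.mem_product, Finset.mem_range] at hp hps
      omega
  have Hrel2 :
      (∑ z ∈ (Finset.range M ×ˢ Finset.range M) ×ˢ (Finset.range M' ×ˢ Finset.range M'),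
        (if z.2.1 + z.2.2 ≤ z.1.1 then Body m b b' x z.1.1 z.1.2 z.2.1 z.2.2 else 0))
      + (∑ z ∈ (Finset.range M ×ˢ Finset.range M) ×ˢ (Finset.range M' ×ˢ Finset.range M'),
        (if z.2.1 ≤ z.1.1 ∧ z.1.1 < z.2.1 + z.2.2 ∧ z.2.1 + z.2.2 ≤ z.1.1 + z.1.2 + 1 then
          Body m b b' x z.1.1 z.1.2 z.2.1 z.2.2 else 0))
      + (∑ z ∈ (Finset.range M ×ˢ Finset.range M) ×ˢ (Finset.range M' ×ˢ Finset.range M'),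
        (if z.1.1 < z.2.1 ∧ z.2.1 + z.2.2 ≤ z.1.1 + z.1.2 + 1 then
          sgn (d + 1) • Body m b b' x z.1.1 z.1.2 z.2.1 z.2.2 else 0)) = 0 := by
    rw [← Finset.sum_add_distrib, ← Finset.sum_add_distrib]
    rw [Finset.sum_congr rfl
      (fun z _ => (term_split m b b' x d z.1.1 z.1.2 z.2.1 z.2.2).symm)]
    exact Hrel
  rw [SL m b b' x N hN hMC (by omega) (by omega),
    SR m b b' x N hN hMC' d (by omega) (by omega),
    SM m b b' x N hN hM hM'] at Hrel2
  simpa using Hrel2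

end DefAux

/-- Let `b, b'` be bounding cochains of a filtered A∞ algebra,
i.e. degree-1 elements with `b ≡ 0 mod Λ₊` (here `I` plays the role of the
maximal ideal `Λ₊` of the Novikov ring) satisfying the Maurer–Cartan equation
`Σ_{k≥0} mₖ(b,…,b) = 0`, and define the deformed operator
`m₁^{b,b'}(x) = Σ_{k,ℓ≥0} m_{k+ℓ+1}(b,…,b, x, b',…,b')`.
Then `m₁^{b,b'} ∘ m₁^{b,b'} = 0`.  (To keep all sums finite we assume the
operations vanish for large arity, as allowed in the context.) -/
theorem deformed_differential_squared_zero
    {R C : Type*} [CommRing R] [AddCommGroup C] [Module R C]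
    (G : ℤ → Submodule R C) (hG : (⨆ d, G d) = ⊤)
    (I : Ideal R)
    (m : ∀ k : ℕ, MultilinearMap R (fun _ : Fin k => C) C)
    (hrel : AInftyRel G (fun k v => m k v))
    (hfin : ∃ N : ℕ, ∀ k, N ≤ k → m k = 0)
    (b b' : C)
    (hbdeg : b ∈ G 1) (hb'deg : b' ∈ G 1)
    (hbI : b ∈ I • (⊤ : Submodule R C)) (hb'I : b' ∈ I • (⊤ : Submodule R C))
    (hMC : (∑ᶠ k : ℕ, m k (fun _ => b)) = 0)
    (hMC' : (∑ᶠ k : ℕ, m k (fun _ => b')) = 0)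
    (Dbb' : C → C)
    (hDbb' : ∀ y : C, Dbb' y =
      ∑ᶠ (k : ℕ), ∑ᶠ (l : ℕ),
        m (k + l + 1) (fun j : Fin (k + l + 1) =>
          if j.1 < k then b else if j.1 = k then y else b')) :
    ∀ x : C, Dbb' (Dbb' x) = 0 := by

  obtain ⟨N, hN⟩ := hfin
  have hexp : ∀ y : C, Dbb' y
      = ∑ q ∈ Finset.range (2 * N + 2) ×ˢ Finset.range (2 * N + 2),
          DefAux.TT m b b' q.1 q.2 y := by
    intro y
    rw [hDbb' y]
    exact DefAux.D_expand m b b' N hN (by omega) y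
  have hDadd : ∀ u v : C, Dbb' (u + v) = Dbb' u + Dbb' v := by
    intro u v
    rw [hexp, hexp, hexp, ← Finset.sum_add_distrib]
    exact Finset.sum_congr rfl (fun q _ => DefAux.TT_add m b b' q.1 q.2 u v)
  have hD0 : Dbb' 0 = 0 := by
    rw [hexp]
    exact Finset.sum_eq_zero (fun q _ => DefAux.TT_zero m b b' q.1 q.2)
  intro x
  have hx : x ∈ ⨆ d, G d := by rw [hG]; exact Submodule.mem_top
  refine Submodule.iSup_induction (motive := fun y => Dbb' (Dbb' y) = 0) G hx
    (fun d y hy => ?_) ?_ ?_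
  · show Dbb' (Dbb' y) = 0
    rw [hexp (Dbb' y), hexp y]
    exact DefAux.key m b b' y G hrel N hN hbdeg hb'deg hMC hMC' d hy
  · show Dbb' (Dbb' 0) = 0
    rw [hD0, hD0]
  · intro u v hu hv
    show Dbb' (Dbb' (u + v)) = 0
    replace hu : Dbb' (Dbb' u) = 0 := hu
    replace hv : Dbb' (Dbb' v) = 0 := hv
    rw [hDadd u v, hDadd (Dbb' u) (Dbb' v), hu, hv, add_zero]
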